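/- Let a, b, c ∈ ℝ with (b,c) ≠ (0,0), a² < b² + c², and b² + c² < 1 + a². Set n = √(a² + b² + c²), α = arctan(a/√(b² + c²)) (so that sin α = a/n and cos α = √(b² + c²)/n), let λ satisfy cos λ = b/√(b² + c²) and sin λ = c/√(b² + c²), set k = √(cos 2α) = √(b² + c² − a²)/n, and s = artanh(n·k)/k (well defined since n·k = √(b² + c² − a²) < 1). Then (tanh(s·k)/k)·(sin α, cos α·cos λ, cos α·sin λ) = (a, b, c); i.e., the H²-like translation curve of the SL(2,ℝ)-tilde geometry with parameters (α, λ) passes through the point with coordinates (a,b,c) at translation arc-length parameter s. -/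

import Mathlib

open Real

/-- The inverse hyperbolic tangent, `artanh x = ½·log((1+x)/(1−x))`. -/
noncomputable def artanh (x : ℝ) : ℝ := (1 / 2) * Real.log ((1 + x) / (1 - x))

lemma tanh_artanh {x : ℝ} (h1 : -1 < x) (h2 : x < 1) : Real.tanh (_root_.artanh x) = x := by
  have h1' : 0 < 1 + x := by linarith
  have h2' : 0 < 1 - x := by linarith
  have hy : 0 < (1 + x) / (1 - x) := div_pos h1' h2'
  have he : Real.exp (_root_.artanh x) * Real.exp (_root_.artanh x) = (1 + x) / (1 - x) := by
    rw [← Real.exp_add]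
    have : _root_.artanh x + _root_.artanh x = Real.log ((1 + x) / (1 - x)) := by
      unfold _root_.artanh; ring
    rw [this, Real.exp_log hy]
  have hepos : 0 < Real.exp (_root_.artanh x) := Real.exp_pos _
  rw [Real.tanh_eq_sinh_div_cosh, Real.sinh_eq, Real.cosh_eq, Real.exp_neg]
  set e := Real.exp (_root_.artanh x) with hedef
  have hene : e ≠ 0 := ne_of_gt hepos
  have he2 : e * e * (1 - x) = 1 + x := by
    rw [he]; field_simp
  have hsum : (e + e⁻¹) / 2 ≠ 0 := by positivity
  rw [div_eq_iff hsum]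
  have hinv : e⁻¹ = e * (1 - x) / (1 + x) := by
    rw [eq_div_iff h1'.ne', inv_mul_eq_div, div_eq_iff hene]
    linear_combination -he2
  rw [hinv]
  field_simp
  ring

/-- The H²-like translation curve of the SL(2,ℝ)-tilde geometry with parameters
`(α, λ)` passes through the point with inhomogeneous coordinates `(a,b,c)` at
translation arc-length parameter `s = artanh(n·k)/k`, where `n = √(a²+b²+c²)`
and `k = √(cos 2α) = √(b²+c²−a²)/n`. -/
theorem sl2r_h2like_translation_curve_through_point
    (a b c : ℝ) (hbc : (b, c) ≠ ((0 : ℝ), (0 : ℝ)))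
    (h1 : a ^ 2 < b ^ 2 + c ^ 2) (h2 : b ^ 2 + c ^ 2 < 1 + a ^ 2)
    (n α lam k s : ℝ)
    (hn : n = Real.sqrt (a ^ 2 + b ^ 2 + c ^ 2))
    (hα : α = Real.arctan (a / Real.sqrt (b ^ 2 + c ^ 2)))
    (hcosl : Real.cos lam = b / Real.sqrt (b ^ 2 + c ^ 2))
    (hsinl : Real.sin lam = c / Real.sqrt (b ^ 2 + c ^ 2))
    (hk : k = Real.sqrt (Real.cos (2 * α)))
    (hs : s = _root_.artanh (n * k) / k) :
    Real.sin α = a / n ∧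
    Real.cos α = Real.sqrt (b ^ 2 + c ^ 2) / n ∧
    k = Real.sqrt (b ^ 2 + c ^ 2 - a ^ 2) / n ∧
    ((Real.tanh (s * k) / k * Real.sin α,
      Real.tanh (s * k) / k * (Real.cos α * Real.cos lam),
      Real.tanh (s * k) / k * (Real.cos α * Real.sin lam)) : ℝ × ℝ × ℝ) = (a, b, c) := by
  have hr2 : 0 < b ^ 2 + c ^ 2 := by nlinarith [sq_nonneg a]
  set r := Real.sqrt (b ^ 2 + c ^ 2) with hr
  have hrpos : 0 < r := Real.sqrt_pos.mpr hr2
  have hrsq : r ^ 2 = b ^ 2 + c ^ 2 := Real.sq_sqrt hr2.le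
  have hn2pos : 0 < a ^ 2 + b ^ 2 + c ^ 2 := by nlinarith
  have hnpos : 0 < n := hn ▸ Real.sqrt_pos.mpr hn2pos
  have hnsq : n ^ 2 = a ^ 2 + b ^ 2 + c ^ 2 := by rw [hn]; exact Real.sq_sqrt hn2pos.le
  have hrne : r ≠ 0 := ne_of_gt hrpos
  have hnne : n ≠ 0 := ne_of_gt hnpos
  have hkey : Real.sqrt (1 + (a / r) ^ 2) = n / r := by
    have : 1 + (a / r) ^ 2 = (n / r) ^ 2 := by
      field_simp
      nlinarith
    rw [this, Real.sqrt_sq (by positivity)]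
  have hsin : Real.sin α = a / n := by
    rw [hα, Real.sin_arctan, hkey]
    field_simp
  have hcos : Real.cos α = r / n := by
    rw [hα, Real.cos_arctan, hkey, one_div_div]
  have hcos2 : Real.cos (2 * α) = (b ^ 2 + c ^ 2 - a ^ 2) / n ^ 2 := by
    rw [Real.cos_two_mul, hcos, div_pow, eq_div_iff (by positivity)]
    field_simp
    linear_combination 2 * hrsq - hnsq
  have hq : 0 < b ^ 2 + c ^ 2 - a ^ 2 := by nlinarith
  have hkval : k = Real.sqrt (b ^ 2 + c ^ 2 - a ^ 2) / n := by
    rw [hk, hcos2, Real.sqrt_div hq.le, Real.sqrt_sq hnpos.le]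
  have hkpos : 0 < k := by
    rw [hkval]; exact div_pos (Real.sqrt_pos.mpr hq) hnpos
  have hkne : k ≠ 0 := ne_of_gt hkpos
  have hnk : n * k = Real.sqrt (b ^ 2 + c ^ 2 - a ^ 2) := by
    rw [hkval]; field_simp
  have hnk_pos : 0 < n * k := mul_pos hnpos hkpos
  have hnk_lt : n * k < 1 := by
    rw [hnk]
    calc Real.sqrt (b ^ 2 + c ^ 2 - a ^ 2) < Real.sqrt 1 :=
          Real.sqrt_lt_sqrt hq.le (by nlinarith)
      _ = 1 := Real.sqrt_one
  have hsk : s * k = _root_.artanh (n * k) := by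
    rw [hs]; field_simp
  have htanh : Real.tanh (s * k) = n * k := by
    rw [hsk]; exact tanh_artanh (by linarith) hnk_lt
  have hdiv : Real.tanh (s * k) / k = n := by
    rw [htanh]; field_simp
  refine ⟨hsin, hcos, hkval, ?_⟩
  simp only [Prod.mk.injEq]
  rw [hdiv, hsin, hcos, hcosl, hsinl]
  refine ⟨by field_simp, ?_, ?_⟩
  · field_simp
  · field_simp
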